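/- (T^{≥1}(ℝ^d), ≻) is the free Zinbiel algebra over ℝ^d: for any real vector space Z equipped with a bilinear map ≻' : Z × Z → Z satisfying a ≻' (b ≻' c) = (a ≻' b + b ≻' a) ≻' c for all a, b, c ∈ Z, and any linear map B : ℝ^d → Z, there exists a unique linear map Λ_B : T^{≥1}(ℝ^d) → Z such that Λ_B(i) = B(e_i) for every letter i (where e_i is the i-th standard basis vector) and Λ_B(x ≻ y) = Λ_B(x) ≻' Λ_B(y) for all x, y ∈ T^{≥1}(ℝ^d). -/

import Mathlib

noncomputable section

open MeasureTheory

/-- Words in the alphabet `{1,…,d}`. -/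
abbrev Word (d : ℕ) := List (Fin d)

/-- `T(ℝ^d)`: the real vector space with basis the words in `{1,…,d}`. -/
abbrev Tens (d : ℕ) := Word d →₀ ℝ

namespace SigPaper

variable {d m s : ℕ}

/-- The basis word `w` as an element of `T(ℝ^d)`. -/
def wordT (w : Word d) : Tens d := Finsupp.single w 1

/-- The shuffle product of two words. -/
def shuffleWord : Word d → Word d → Tens d
  | [], v => Finsupp.single v 1
  | u, [] => Finsupp.single u 1
  | a :: u, b :: v =>
      Finsupp.mapDomain (fun w => a :: w) (shuffleWord u (b :: v)) +
      Finsupp.mapDomain (fun w => b :: w) (shuffleWord (a :: u) v)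
  termination_by u v => u.length + v.length
  decreasing_by all_goals simp +arith

/-- The shuffle product `⧢` on `T(ℝ^d)`, the bilinear extension of the shuffle of words. -/
def shuffle (x y : Tens d) : Tens d :=
  x.sum fun u a => y.sum fun v b => (a * b) • shuffleWord u v

/-- The operator appending the letter `i` at the end of every word (`T_i^+`). -/
def appendLetter (i : Fin d) (x : Tens d) : Tens d :=
  Finsupp.mapDomain (fun w => w ++ [i]) x

/-- The right half-shuffle of two words: `w ≻ (v∘i) = (w ⧢ v)∘i` (zero if the right word
is empty). -/
def halfShuffleWord (u v : Word d) : Tens d :=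
  match v.getLast? with
  | none => 0
  | some i => appendLetter i (shuffleWord u v.dropLast)

/-- The right half-shuffle `≻`, extended bilinearly. -/
def halfShuffle (x y : Tens d) : Tens d :=
  x.sum fun u a => y.sum fun v b => (a * b) • halfShuffleWord u v

/-- The letter-appending operator `T_i^+`. -/
def Tplus (i : Fin d) : Tens d → Tens d := appendLetter i

/-- `T_i^-` on a word: removes the last letter if it equals `i`, otherwise `0`. -/
def TminusWord (i : Fin d) (w : Word d) : Tens d :=
  match w.getLast? with
  | none => 0
  | some j => if j = i then Finsupp.single w.dropLast 1 else 0

/-- The letter-removing operator `T_i^-`. -/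
def Tminus (i : Fin d) (x : Tens d) : Tens d := x.sum fun w a => a • TminusWord i w

/-- The single-letter word `i` in `T(ℝ^d)`. -/
def letterT (i : Fin d) : Tens d := Finsupp.single [i] 1

/-- Shuffle powers `x^{⧢ n}`. -/
def shufflePow (x : Tens d) : ℕ → Tens d
  | 0 => Finsupp.single [] 1
  | n + 1 => shuffle (shufflePow x n) x

/-- Shuffle product of a list of elements. -/
def shuffleList : List (Tens d) → Tens d
  | [] => Finsupp.single [] 1
  | x :: xs => shuffle x (shuffleList xs)

/-- Image of the monomial `x^t` under `φ_d`: the shuffle product of its letters. -/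
def phiMon (t : Fin d →₀ ℕ) : Tens d :=
  shuffleList ((List.finRange d).map fun i => shufflePow (letterT i) (t i))

/-- The embedding `φ_d : ℝ[x₁,…,x_d] → (T(ℝ^d), ⧢)` sending the monomial
`x_{i₁}⋯x_{i_l}` to `i₁ ⧢ ⋯ ⧢ i_l`. -/
def phi (f : MvPolynomial (Fin d) ℝ) : Tens d :=
  f.support.sum fun t => f.coeff t • phiMon t

/-- A polynomial map `p : ℝ^d → ℝ^m`, given by `m` polynomials in `d` variables. -/
abbrev PolyMap (d m : ℕ) := Fin m → MvPolynomial (Fin d) ℝ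

/-- `k_p^{ij} = φ_d(∂p_i/∂x_j) ∈ T(ℝ^d)`. -/
def kP (p : PolyMap d m) (i : Fin m) (j : Fin d) : Tens d :=
  phi (MvPolynomial.pderiv j (p i))

/-- Auxiliary: `M_p` on reversed words, so that `M_p(e) = e` and
`M_p(w∘i) = Σ_j (M_p(w) ⧢ k_p^{ij})∘j`. -/
def MpRev (p : PolyMap d m) : List (Fin m) → Tens d
  | [] => Finsupp.single [] 1
  | i :: w => ∑ j : Fin d, appendLetter j (shuffle (MpRev p w) (kP p i j))

/-- `M_p` on a word. -/
def MpWord (p : PolyMap d m) (w : Word m) : Tens d := MpRev p w.reverse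

/-- The linear map `M_p : T(ℝ^m) → T(ℝ^d)`. -/
def Mp (p : PolyMap d m) (x : Tens m) : Tens d := x.sum fun w a => a • MpWord p w

/-- `X : [0,L] → ℝ^d` is piecewise continuously differentiable: there is a partition
`0 = t₀ ≤ t₁ ≤ ⋯ ≤ t_n = L` such that `X` is `C¹` on each subinterval. -/
def PiecewiseC1 (X : ℝ → Fin d → ℝ) (L : ℝ) : Prop :=
  ∃ (n : ℕ) (t : Fin (n + 1) → ℝ), Monotone t ∧ t 0 = 0 ∧ t (Fin.last n) = L ∧
    ∀ k : Fin n, ContDiffOn ℝ 1 X (Set.Icc (t k.castSucc) (t k.succ))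

/-- Iterated-integral signature coefficients, on reversed words:
`⟨σ(X|_{[0,t]}), w∘i⟩ = ∫_0^t ⟨σ(X|_{[0,r]}), w⟩ Ẋ^i_r dr`. -/
def sigRev (X : ℝ → Fin d → ℝ) : List (Fin d) → ℝ → ℝ
  | [], _ => 1
  | i :: w, t => ∫ r in (0:ℝ)..t, sigRev X w r * deriv (fun u => X u i) r

/-- `⟨σ(X|_{[0,L]}), w⟩`, the signature coefficient of the word `w`. -/
def sigWord (X : ℝ → Fin d → ℝ) (L : ℝ) (w : Word d) : ℝ := sigRev X w.reverse L

/-- The pairing `⟨σ(X|_{[0,L]}), x⟩` for `x ∈ T(ℝ^d)`. -/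
def sigT (X : ℝ → Fin d → ℝ) (L : ℝ) (x : Tens d) : ℝ :=
  x.sum fun w a => a * sigWord X L w

/-- The transformed path `p(X) : t ↦ p(X(t))`. -/
def pPath (p : PolyMap d m) (X : ℝ → Fin d → ℝ) : ℝ → Fin m → ℝ :=
  fun t i => MvPolynomial.eval (X t) (p i)

/-- The translated polynomial map `p̃(y) = p(y + x₀) − p(x₀)`, satisfying `p̃(0) = 0`. -/
def ptilde (p : PolyMap d m) (x0 : Fin d → ℝ) : PolyMap d m := fun i =>
  MvPolynomial.aeval (fun j => MvPolynomial.X j + MvPolynomial.C (x0 j)) (p i) -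
    MvPolynomial.C (MvPolynomial.eval x0 (p i))

/-- The pairing `⟨exp_∘(L·𝟙), x⟩` for `x ∈ T(ℝ¹)`: the coefficient of the word of
length `n` in `exp_∘(L·𝟙)` is `Lⁿ/n!`. -/
def expPair (L : ℝ) (x : Tens 1) : ℝ :=
  x.sum fun w a => a * (L ^ w.length / (w.length.factorial : ℝ))

/-- The pairing `⟨σ(X) ∘ σ(Y), x⟩` of the concatenation product of two signatures with
`x ∈ T(ℝ^d)`: on a word `w` it is `Σ_{u∘v = w} ⟨σ(X), u⟩·⟨σ(Y), v⟩`. -/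
def concatPair (X Y : ℝ → Fin d → ℝ) (L : ℝ) (x : Tens d) : ℝ :=
  x.sum fun w a =>
    a * ∑ k ∈ Finset.range (w.length + 1), sigWord X L (w.take k) * sigWord Y L (w.drop k)


section Zin0aux
set_option linter.unreachableTactic false
set_option linter.unusedTactic false
set_option linter.unnecessarySimpa false

lemma shuffleWord_nil_left (v : Word d) : shuffleWord [] v = Finsupp.single v 1 := by
  cases v <;> rw [shuffleWord]

lemma shuffleWord_nil_right (u : Word d) : shuffleWord u [] = Finsupp.single u 1 := by
  cases u with
  | nil => rw [shuffleWord]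
  | cons a u => rw [shuffleWord]; simp

lemma shuffleWord_cons (a b : Fin d) (u v : Word d) :
    shuffleWord (a :: u) (b :: v) =
      Finsupp.mapDomain (fun w => a :: w) (shuffleWord u (b :: v)) +
      Finsupp.mapDomain (fun w => b :: w) (shuffleWord (a :: u) v) := by
  rw [shuffleWord]

lemma appendLetter_mapDomain_cons (i a : Fin d) (x : Tens d) :
    appendLetter i (Finsupp.mapDomain (fun w => a :: w) x) =
      Finsupp.mapDomain (fun w => a :: w) (appendLetter i x) := by
  unfold appendLetter
  rw [← Finsupp.mapDomain_comp, ← Finsupp.mapDomain_comp]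
  rfl

lemma appendLetter_add (i : Fin d) (x y : Tens d) :
    appendLetter i (x + y) = appendLetter i x + appendLetter i y :=
  Finsupp.mapDomain_add

lemma appendLetter_single (i : Fin d) (u : Word d) (c : ℝ) :
    appendLetter i (Finsupp.single u c) = Finsupp.single (u ++ [i]) c :=
  Finsupp.mapDomain_single

theorem shuffleWord_comm : ∀ (u v : Word d), shuffleWord u v = shuffleWord v u
  | [], v => by rw [shuffleWord_nil_left, shuffleWord_nil_right]
  | a :: u, [] => by rw [shuffleWord_nil_left, shuffleWord_nil_right]
  | a :: u, b :: v => by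
      rw [shuffleWord_cons, shuffleWord_cons,
        shuffleWord_comm u (b :: v), shuffleWord_comm (a :: u) v, add_comm]
  termination_by u v => u.length + v.length
  decreasing_by all_goals simp +arith

theorem shuffleWord_concat :
    ∀ (u v : Word d) (j i : Fin d),
      shuffleWord (u ++ [j]) (v ++ [i]) =
        appendLetter i (shuffleWord (u ++ [j]) v) +
        appendLetter j (shuffleWord u (v ++ [i]))
  | [], [], j, i => by
      simp only [List.nil_append, shuffleWord_cons, shuffleWord_nil_left,
        shuffleWord_nil_right, Finsupp.mapDomain_single, appendLetter_single,
        List.cons_append, List.nil_append]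
      all_goals abel
  | a :: u, [], j, i => by
      have IH := shuffleWord_concat u [] j i
      simp only [List.nil_append, List.cons_append] at *
      rw [shuffleWord_cons, IH, shuffleWord_nil_right, shuffleWord_nil_right]
      simp only [Finsupp.mapDomain_add, Finsupp.mapDomain_single,
        appendLetter_add, appendLetter_single, appendLetter_mapDomain_cons]
      rw [shuffleWord_cons, shuffleWord_nil_right]
      simp only [appendLetter_add, appendLetter_single, appendLetter_mapDomain_cons,
        Finsupp.mapDomain_single]
      simp only [List.cons_append, List.append_assoc, List.singleton_append]
      all_goals abel
  | [], b :: v, j, i => by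
      have IH := shuffleWord_concat [] v j i
      simp only [List.nil_append, List.cons_append] at *
      rw [shuffleWord_cons, IH, shuffleWord_nil_left, shuffleWord_nil_left]
      simp only [Finsupp.mapDomain_add, Finsupp.mapDomain_single,
        appendLetter_add, appendLetter_single, appendLetter_mapDomain_cons]
      rw [shuffleWord_cons, shuffleWord_nil_left]
      simp only [appendLetter_add, appendLetter_single, appendLetter_mapDomain_cons,
        Finsupp.mapDomain_single]
      simp only [List.cons_append, List.append_assoc, List.singleton_append]
      all_goals abel
  | a :: u, b :: v, j, i => by
      have IH1 := shuffleWord_concat u (b :: v) j i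
      have IH2 := shuffleWord_concat (a :: u) v j i
      simp only [List.cons_append] at *
      rw [shuffleWord_cons, IH1, IH2]
      rw [show shuffleWord (a :: (u ++ [j])) (b :: v) =
        Finsupp.mapDomain (fun w => a :: w) (shuffleWord (u ++ [j]) (b :: v)) +
        Finsupp.mapDomain (fun w => b :: w) (shuffleWord (a :: (u ++ [j])) v) from
          shuffleWord_cons ..]
      rw [show shuffleWord (a :: u) (b :: (v ++ [i])) =
        Finsupp.mapDomain (fun w => a :: w) (shuffleWord u (b :: (v ++ [i]))) +
        Finsupp.mapDomain (fun w => b :: w) (shuffleWord (a :: u) (v ++ [i])) from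
          shuffleWord_cons ..]
      simp only [Finsupp.mapDomain_add, appendLetter_add, appendLetter_mapDomain_cons]
      abel
  termination_by u v => u.length + v.length
  decreasing_by all_goals simp +arith

lemma halfShuffleWord_concat (u v : Word d) (i : Fin d) :
    halfShuffleWord u (v ++ [i]) = appendLetter i (shuffleWord u v) := by
  unfold halfShuffleWord
  rw [List.getLast?_concat, List.dropLast_concat]

lemma shuffleWord_split (u v : Word d) (hu : u ≠ []) (hv : v ≠ []) :
    shuffleWord u v = halfShuffleWord u v + halfShuffleWord v u := by
  rcases List.eq_nil_or_concat u with rfl | ⟨u', j, rfl⟩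
  · exact absurd rfl hu
  rcases List.eq_nil_or_concat v with rfl | ⟨v', i, rfl⟩
  · exact absurd rfl hv
  simp only [List.concat_eq_append]
  rw [halfShuffleWord_concat, halfShuffleWord_concat, shuffleWord_concat,
    shuffleWord_comm u' (v' ++ [i])]

lemma appendLetter_apply_nil (i : Fin d) (x : Tens d) :
    appendLetter i x ([] : Word d) = 0 := by
  apply Finsupp.mapDomain_notin_range
  rintro ⟨w, hw⟩
  have := congrArg List.length hw
  simp at this

lemma halfShuffleWord_apply_nil (u v : Word d) :
    halfShuffleWord u v ([] : Word d) = 0 := by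
  rcases List.eq_nil_or_concat v with rfl | ⟨v', i, rfl⟩
  · rfl
  · simp only [List.concat_eq_append, halfShuffleWord_concat, appendLetter_apply_nil]

section Zin
variable {Z : Type*} [AddCommGroup Z] [Module ℝ Z]
  (zp : Z →ₗ[ℝ] Z →ₗ[ℝ] Z) (B : (Fin d → ℝ) →ₗ[ℝ] Z)

/-- value on a reversed word -/
def gfun : List (Fin d) → Z
  | [] => 0
  | [i] => B (Pi.single i 1)
  | i :: w => zp (gfun w) (B (Pi.single i 1))

lemma gfun_cons (i : Fin d) (w : List (Fin d)) (hw : w ≠ []) :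
    gfun zp B (i :: w) = zp (gfun zp B w) (B (Pi.single i 1)) := by
  cases w with
  | nil => exact absurd rfl hw
  | cons j w => rfl

def LamB : Tens d →ₗ[ℝ] Z :=
  Finsupp.linearCombination ℝ (fun w : Word d => gfun zp B w.reverse)

lemma LamB_single (w : Word d) (c : ℝ) :
    LamB zp B (Finsupp.single w c) = c • gfun zp B w.reverse := by
  simp [LamB]

lemma LamB_appendLetter (i : Fin d) (x : Tens d) (hx : x ([] : Word d) = 0) :
    LamB zp B (appendLetter i x) = zp (LamB zp B x) (B (Pi.single i 1)) := by
  unfold LamB appendLetter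
  rw [Finsupp.linearCombination_mapDomain]
  rw [Finsupp.linearCombination_apply, Finsupp.linearCombination_apply]
  rw [← LinearMap.flip_apply (f := zp), map_finsuppSum]
  apply Finsupp.sum_congr
  intro w hw
  have hwne : w ≠ [] := by
    rintro rfl; exact (Finsupp.mem_support_iff.mp hw) hx
  have : ((fun w : Word d => gfun zp B w.reverse) ∘ fun w => w ++ [i]) w
      = zp (gfun zp B w.reverse) (B (Pi.single i 1)) := by
    simp only [Function.comp_apply, List.reverse_append, List.reverse_cons,
      List.reverse_nil, List.nil_append, List.singleton_append]
    exact gfun_cons zp B i w.reverse (by simpa using hwne)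
  rw [this]
  simp [LinearMap.flip_apply, _root_.map_smul]

lemma LamB_halfShuffleWord
    (hzin : ∀ a b c : Z, zp a (zp b c) = zp (zp a b + zp b a) c) :
    ∀ n (u v : Word d), u ≠ [] → v ≠ [] → u.length + v.length ≤ n →
      LamB zp B (halfShuffleWord u v)
        = zp (gfun zp B u.reverse) (gfun zp B v.reverse) := by
  intro n
  induction n with
  | zero => intro u v hu hv h; simp at h; exact absurd h.1 (by simp [hu])
  | succ n IH =>
    intro u v hu hv hlen
    rcases List.eq_nil_or_concat v with rfl | ⟨v', i, rfl⟩
    · exact absurd rfl hv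
    simp only [List.concat_eq_append] at *
    rw [halfShuffleWord_concat]
    rcases List.eq_nil_or_concat v' with rfl | ⟨v'', k, rfl⟩
    · rw [shuffleWord_nil_right, appendLetter_single, LamB_single, one_smul]
      simp only [List.reverse_append, List.reverse_cons, List.reverse_nil,
        List.nil_append, List.singleton_append]
      rw [gfun_cons zp B i u.reverse (by simpa using hu)]
      rfl
    · simp only [List.concat_eq_append] at hv hlen ⊢
      have hv' : (v'' ++ [k] : Word d) ≠ [] := by simp
      have hsplit := shuffleWord_split u (v'' ++ [k]) hu hv'
      rw [hsplit, appendLetter_add, map_add]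
      have h1 : LamB zp B (halfShuffleWord u (v'' ++ [k]))
          = zp (gfun zp B u.reverse) (gfun zp B (v'' ++ [k]).reverse) := by
        apply IH u (v'' ++ [k]) hu hv'
        simp only [List.length_append, List.length_cons, List.length_nil] at hlen ⊢
        omega
      have h2 : LamB zp B (halfShuffleWord (v'' ++ [k]) u)
          = zp (gfun zp B (v'' ++ [k]).reverse) (gfun zp B u.reverse) := by
        apply IH (v'' ++ [k]) u hv' hu
        simp only [List.length_append, List.length_cons, List.length_nil] at hlen ⊢
        omega
      rw [LamB_appendLetter zp B i _ (halfShuffleWord_apply_nil _ _),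
        LamB_appendLetter zp B i _ (halfShuffleWord_apply_nil _ _), h1, h2]
      rw [show ((v'' ++ [k] ++ [i] : Word d)).reverse = i :: (v'' ++ [k]).reverse by simp]
      rw [gfun_cons zp B i _ (by simp), hzin, map_add, LinearMap.add_apply]

lemma LamB_halfShuffle
    (hzin : ∀ a b c : Z, zp a (zp b c) = zp (zp a b + zp b a) c)
    (x y : Tens d) (hx : x ([] : Word d) = 0) (hy : y ([] : Word d) = 0) :
    LamB zp B (halfShuffle x y) = zp (LamB zp B x) (LamB zp B y) := by
  unfold halfShuffle
  rw [map_finsuppSum]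
  conv_rhs => rw [show (LamB zp B x) = x.sum fun u a => a • gfun zp B u.reverse from
    Finsupp.linearCombination_apply _ x]
  rw [← LinearMap.flip_apply (f := zp), map_finsuppSum]
  refine Finsupp.sum_congr fun u hu => ?_
  have hune : u ≠ [] := fun h => (Finsupp.mem_support_iff.mp hu) (h ▸ hx)
  rw [map_finsuppSum]
  simp only [LinearMap.flip_apply, _root_.map_smul, LinearMap.smul_apply]
  conv_rhs => rw [show (LamB zp B y) = y.sum fun v b => b • gfun zp B v.reverse from
    Finsupp.linearCombination_apply _ y]
  rw [map_finsuppSum (zp (gfun zp B u.reverse)), Finsupp.smul_sum]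
  refine Finsupp.sum_congr fun v hv => ?_
  have hvne : v ≠ [] := fun h => (Finsupp.mem_support_iff.mp hv) (h ▸ hy)
  rw [_root_.map_smul,
    LamB_halfShuffleWord zp B hzin (u.length + v.length) u v hune hvne le_rfl,
    mul_smul]

lemma halfShuffle_single (u v : Word d) (a b : ℝ) :
    halfShuffle (Finsupp.single u a) (Finsupp.single v b)
      = (a * b) • halfShuffleWord u v := by
  unfold halfShuffle
  rw [Finsupp.sum_single_index, Finsupp.sum_single_index]
  · simp
  · simp [Finsupp.sum_single_index]

lemma single_concat_eq_halfShuffle (u : Word d) (i : Fin d) :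
    (Finsupp.single (u ++ [i]) 1 : Tens d)
      = halfShuffle (Finsupp.single u 1) (Finsupp.single [i] 1) := by
  rw [halfShuffle_single, one_mul, one_smul,
    show ([i] : Word d) = [] ++ [i] from rfl, halfShuffleWord_concat,
    shuffleWord_nil_right, appendLetter_single]
  simp

lemma uniq_word (Lam₁ Lam₂ : Tens d →ₗ[ℝ] Z)
    (hB₁ : ∀ i : Fin d, Lam₁ (Finsupp.single ([i] : Word d) 1) = B (Pi.single i 1))
    (hm₁ : ∀ x y : Tens d, x ([] : Word d) = 0 → y ([] : Word d) = 0 →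
      Lam₁ (halfShuffle x y) = zp (Lam₁ x) (Lam₁ y))
    (hB₂ : ∀ i : Fin d, Lam₂ (Finsupp.single ([i] : Word d) 1) = B (Pi.single i 1))
    (hm₂ : ∀ x y : Tens d, x ([] : Word d) = 0 → y ([] : Word d) = 0 →
      Lam₂ (halfShuffle x y) = zp (Lam₂ x) (Lam₂ y)) :
    ∀ (n : ℕ) (w : Word d), w ≠ [] → w.length ≤ n →
      Lam₁ (Finsupp.single w 1) = Lam₂ (Finsupp.single w 1) := by
  intro n
  induction n with
  | zero => intro w hw hl; exact absurd (List.length_eq_zero_iff.mp (Nat.le_zero.mp hl)) hw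
  | succ n IH =>
    intro w hw hl
    rcases List.eq_nil_or_concat w with rfl | ⟨w', i, rfl⟩
    · exact absurd rfl hw
    simp only [List.concat_eq_append] at *
    rcases List.eq_nil_or_concat w' with rfl | ⟨w'', k, rfl⟩
    · simpa using (hB₁ i).trans (hB₂ i).symm
    simp only [List.concat_eq_append] at *
    have hw' : (w'' ++ [k] : Word d) ≠ [] := by simp
    have hz1 : (Finsupp.single (w'' ++ [k] : Word d) (1:ℝ)) ([] : Word d) = 0 :=
      Finsupp.single_eq_of_ne (by simpa using hw')
    have hz2 : (Finsupp.single ([i] : Word d) (1:ℝ)) ([] : Word d) = 0 :=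
      Finsupp.single_eq_of_ne (by simp)
    rw [single_concat_eq_halfShuffle, hm₁ _ _ hz1 hz2, hm₂ _ _ hz1 hz2,
      IH (w'' ++ [k]) hw' (by simp only [List.length_append, List.length_cons,
        List.length_nil] at hl ⊢; omega),
      hB₁ i, hB₂ i]

lemma uniq_aux (Lam₁ Lam₂ : Tens d →ₗ[ℝ] Z)
    (hB₁ : ∀ i : Fin d, Lam₁ (Finsupp.single ([i] : Word d) 1) = B (Pi.single i 1))
    (hm₁ : ∀ x y : Tens d, x ([] : Word d) = 0 → y ([] : Word d) = 0 →
      Lam₁ (halfShuffle x y) = zp (Lam₁ x) (Lam₁ y))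
    (hB₂ : ∀ i : Fin d, Lam₂ (Finsupp.single ([i] : Word d) 1) = B (Pi.single i 1))
    (hm₂ : ∀ x y : Tens d, x ([] : Word d) = 0 → y ([] : Word d) = 0 →
      Lam₂ (halfShuffle x y) = zp (Lam₂ x) (Lam₂ y))
    (x : Tens d) (hx : x ([] : Word d) = 0) : Lam₁ x = Lam₂ x := by
  conv_lhs => rw [← Finsupp.sum_single x]
  conv_rhs => rw [← Finsupp.sum_single x]
  rw [map_finsuppSum, map_finsuppSum]
  refine Finsupp.sum_congr fun w hw => ?_
  have hwne : w ≠ [] := fun h => (Finsupp.mem_support_iff.mp hw) (h ▸ hx)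
  rw [show (Finsupp.single w (x w) : Tens d) = (x w) • Finsupp.single w 1 by
    simp [Finsupp.smul_single], _root_.map_smul, _root_.map_smul,
    uniq_word zp B Lam₁ Lam₂ hB₁ hm₁ hB₂ hm₂ w.length w hwne le_rfl]


end Zin
end Zin0aux

/-- `(T^{≥1}(ℝ^d), ≻)` is the free Zinbiel algebra over `ℝ^d`: for every
Zinbiel algebra `(Z, ≻')` and every linear map `B : ℝ^d → Z` there is a unique linear map
`Λ_B : T^{≥1}(ℝ^d) → Z` with `Λ_B(i) = B(e_i)` for all letters `i` and
`Λ_B(x ≻ y) = Λ_B(x) ≻' Λ_B(y)`. (Maps on `T^{≥1}(ℝ^d)` are represented by linear maps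
on `T(ℝ^d)`, with the conditions imposed on elements with vanishing empty-word
coefficient, i.e. on `T^{≥1}(ℝ^d)`; uniqueness is asserted on `T^{≥1}(ℝ^d)`.) -/
theorem free_zinbiel (d : ℕ) (Z : Type*) [AddCommGroup Z] [Module ℝ Z]
    (zp : Z →ₗ[ℝ] Z →ₗ[ℝ] Z)
    (hzin : ∀ a b c : Z, zp a (zp b c) = zp (zp a b + zp b a) c)
    (B : (Fin d → ℝ) →ₗ[ℝ] Z) :
    (∃ Lam : Tens d →ₗ[ℝ] Z,
        (∀ i : Fin d, Lam (wordT [i]) = B (Pi.single i 1)) ∧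
        (∀ x y : Tens d, x ([] : Word d) = 0 → y ([] : Word d) = 0 →
          Lam (halfShuffle x y) = zp (Lam x) (Lam y))) ∧
    (∀ Lam₁ Lam₂ : Tens d →ₗ[ℝ] Z,
        ((∀ i : Fin d, Lam₁ (wordT [i]) = B (Pi.single i 1)) ∧
          (∀ x y : Tens d, x ([] : Word d) = 0 → y ([] : Word d) = 0 →
            Lam₁ (halfShuffle x y) = zp (Lam₁ x) (Lam₁ y))) →
        ((∀ i : Fin d, Lam₂ (wordT [i]) = B (Pi.single i 1)) ∧
          (∀ x y : Tens d, x ([] : Word d) = 0 → y ([] : Word d) = 0 →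
            Lam₂ (halfShuffle x y) = zp (Lam₂ x) (Lam₂ y))) →
        ∀ x : Tens d, x ([] : Word d) = 0 → Lam₁ x = Lam₂ x) := by
  constructor
  · refine ⟨LamB zp B, fun i => ?_, fun x y hx hy => LamB_halfShuffle zp B hzin x y hx hy⟩
    rw [wordT, LamB_single, one_smul]
    rfl
  · rintro Lam₁ Lam₂ ⟨hB₁, hm₁⟩ ⟨hB₂, hm₂⟩ x hx
    exact uniq_aux zp B Lam₁ Lam₂ hB₁ hm₁ hB₂ hm₂ x hx


end SigPaper
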